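/- For every vertex v of the integer hull of a knapsack polytope with s = |supp(v)| and Δ = ‖a‖_∞, one has s ≤ log₂(3.51 · √s · Δ). -/
import Mathlib


/-- The integer hull of the knapsack polytope `{x ≥ 0 : aᵀx = b}`. -/
def knapsackHull {n : ℕ} (a : Fin n → ℤ) (b : ℤ) : Set (Fin n → ℝ) :=
  convexHull ℝ
    {x | ∃ z : Fin n → ℤ, (∀ i, 0 ≤ z i) ∧ (∑ i, a i * z i) = b ∧ x = fun i => (z i : ℝ)}

/-- `v` is a vertex of `P` if `v ∈ P` and `v` is not in the convex hull of `P \ {v}`. -/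
def IsVertex {n : ℕ} (P : Set (Fin n → ℝ)) (v : Fin n → ℝ) : Prop :=
  v ∈ P ∧ v ∉ convexHull ℝ (P \ {v})

open Finset in
lemma vertex_integral {n : ℕ} (a : Fin n → ℤ) (b : ℤ) (v : Fin n → ℝ)
    (hv : IsVertex (knapsackHull a b) v) :
    ∃ z : Fin n → ℤ, (∀ i, 0 ≤ z i) ∧ (∑ i, a i * z i) = b ∧ v = fun i => (z i : ℝ) := by
  by_contra hvD
  have hD : {x : Fin n → ℝ | ∃ z : Fin n → ℤ, (∀ i, 0 ≤ z i) ∧ (∑ i, a i * z i) = b ∧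
      x = fun i => (z i : ℝ)} ⊆ knapsackHull a b \ {v} := by
    intro x hx
    refine ⟨subset_convexHull ℝ _ hx, fun hxv => ?_⟩
    have hxv' : x = v := hxv
    subst hxv'
    exact hvD hx
  exact hv.2 (convexHull_mono hD hv.1)

lemma not_vertex_of_midpoint {n : ℕ} (P : Set (Fin n → ℝ)) (v y₁ y₂ : Fin n → ℝ)
    (h₁ : y₁ ∈ P) (h₂ : y₂ ∈ P) (hne₁ : y₁ ≠ v) (hne₂ : y₂ ≠ v)
    (hmid : v = (1/2 : ℝ) • y₁ + (1/2 : ℝ) • y₂) :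
    v ∈ convexHull ℝ (P \ {v}) := by
  have c := convex_convexHull ℝ (P \ {v})
  have m₁ : y₁ ∈ convexHull ℝ (P \ {v}) := subset_convexHull ℝ _ ⟨h₁, hne₁⟩
  have m₂ : y₂ ∈ convexHull ℝ (P \ {v}) := subset_convexHull ℝ _ ⟨h₂, hne₂⟩
  have h := c m₁ m₂ (by norm_num : (0:ℝ) ≤ 1/2) (by norm_num : (0:ℝ) ≤ 1/2) (by norm_num)
  rwa [← hmid] at h

lemma subset_sums_inj {n : ℕ} (a : Fin n → ℤ) (b : ℤ) (v : Fin n → ℝ)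
    (hv : IsVertex (knapsackHull a b) v)
    (z : Fin n → ℤ) (hz0 : ∀ i, 0 ≤ z i) (hzb : (∑ i, a i * z i) = b)
    (hvz : v = fun i => (z i : ℝ))
    (T₁ T₂ : Finset (Fin n)) (h₁ : ∀ i ∈ T₁, z i ≠ 0) (h₂ : ∀ i ∈ T₂, z i ≠ 0)
    (hsum : (∑ i ∈ T₁, a i) = ∑ i ∈ T₂, a i) : T₁ = T₂ := by
  classical
  by_contra hne
  set U₁ : Finset (Fin n) := T₁ \ T₂ with hU₁
  set U₂ : Finset (Fin n) := T₂ \ T₁ with hU₂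
  have hUsum : (∑ i ∈ U₁, a i) = ∑ i ∈ U₂, a i := by
    have e₁ : (∑ i ∈ T₁, a i) = (∑ i ∈ U₁, a i) + ∑ i ∈ T₁ ∩ T₂, a i := by
      rw [hU₁, ← Finset.sdiff_inter_self_left T₁ T₂]
      exact (Finset.sum_sdiff Finset.inter_subset_left).symm
    have e₂ : (∑ i ∈ T₂, a i) = (∑ i ∈ U₂, a i) + ∑ i ∈ T₂ ∩ T₁, a i := by
      rw [hU₂, ← Finset.sdiff_inter_self_left T₂ T₁]
      exact (Finset.sum_sdiff Finset.inter_subset_left).symm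
    have e₃ : (∑ i ∈ T₂ ∩ T₁, a i) = ∑ i ∈ T₁ ∩ T₂, a i := by rw [Finset.inter_comm]
    rw [e₁, e₂, e₃] at hsum
    omega
  have hwne : ∃ i, ((if i ∈ U₁ then (1:ℤ) else 0) - (if i ∈ U₂ then 1 else 0)) ≠ 0 := by
    by_cases hsub : T₁ ⊆ T₂
    · obtain ⟨i, hi₂, hi₁⟩ := Finset.exists_of_ssubset ⟨hsub, fun h => hne (Finset.Subset.antisymm hsub h)⟩
      refine ⟨i, ?_⟩
      have e1 : i ∉ U₁ := by simp [hU₁, hi₁]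
      have e2 : i ∈ U₂ := Finset.mem_sdiff.2 ⟨hi₂, hi₁⟩
      simp [e1, e2]
    · obtain ⟨i, hi₁, hi₂⟩ := Finset.not_subset.1 hsub
      refine ⟨i, ?_⟩
      have e1 : i ∈ U₁ := Finset.mem_sdiff.2 ⟨hi₁, hi₂⟩
      have e2 : i ∉ U₂ := by simp [hU₂, hi₁]
      simp [e1, e2]
  set w : Fin n → ℤ := fun i => (if i ∈ U₁ then 1 else 0) - (if i ∈ U₂ then 1 else 0)
    with hw
  have hd : ∀ i, ¬ (i ∈ U₁ ∧ i ∈ U₂) := by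
    intro i ⟨hi₁, hi₂⟩
    exact (Finset.mem_sdiff.1 hi₂).2 (Finset.mem_sdiff.1 hi₁).1
  have hz1 : ∀ i ∈ U₁, 1 ≤ z i := fun i hi => by
    have := h₁ i (Finset.mem_sdiff.1 hi).1; have := hz0 i; omega
  have hz2 : ∀ i ∈ U₂, 1 ≤ z i := fun i hi => by
    have := h₂ i (Finset.mem_sdiff.1 hi).1; have := hz0 i; omega
  have hwaw : (∑ i, a i * w i) = 0 := by
    have : ∀ i, a i * w i = (if i ∈ U₁ then a i else 0) - (if i ∈ U₂ then a i else 0) := by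
      intro i; by_cases hi₁ : i ∈ U₁ <;> by_cases hi₂ : i ∈ U₂ <;> simp [hw, hi₁, hi₂] <;> ring
    simp_rw [this, Finset.sum_sub_distrib, Finset.sum_ite_mem, Finset.univ_inter, hUsum,
      sub_self]
  -- the two feasible points
  have memP : (fun i => ((z i + w i : ℤ) : ℝ)) ∈ knapsackHull a b := by
    refine subset_convexHull ℝ
      {x | ∃ y : Fin n → ℤ, (∀ i, 0 ≤ y i) ∧ (∑ i, a i * y i) = b ∧ x = fun i => (y i : ℝ)}
      ⟨fun i => z i + w i, fun i => ?_, ?_, rfl⟩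
    · by_cases hi₁ : i ∈ U₁ <;> by_cases hi₂ : i ∈ U₂ <;>
        simp only [hw, hi₁, hi₂, if_true, if_false]
      · exact absurd ⟨hi₁, hi₂⟩ (hd i)
      · have := hz0 i; omega
      · have := hz2 i hi₂; omega
      · have := hz0 i; omega
    · simp_rw [mul_add, Finset.sum_add_distrib, hzb, hwaw, add_zero]
  have memM : (fun i => ((z i - w i : ℤ) : ℝ)) ∈ knapsackHull a b := by
    refine subset_convexHull ℝ
      {x | ∃ y : Fin n → ℤ, (∀ i, 0 ≤ y i) ∧ (∑ i, a i * y i) = b ∧ x = fun i => (y i : ℝ)}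
      ⟨fun i => z i - w i, fun i => ?_, ?_, rfl⟩
    · by_cases hi₁ : i ∈ U₁ <;> by_cases hi₂ : i ∈ U₂ <;>
        simp only [hw, hi₁, hi₂, if_true, if_false]
      · exact absurd ⟨hi₁, hi₂⟩ (hd i)
      · have := hz1 i hi₁; omega
      · have := hz0 i; omega
      · have := hz0 i; omega
    · simp_rw [mul_sub, Finset.sum_sub_distrib, hzb, hwaw, sub_zero]
  obtain ⟨j, hj⟩ := hwne
  have hwj : w j ≠ 0 := hj
  have hneP : (fun i => ((z i + w i : ℤ) : ℝ)) ≠ v := by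
    rw [hvz]
    intro h
    have h' : ((z j + w j : ℤ) : ℝ) = ((z j : ℤ) : ℝ) := congrFun h j
    have : (z j + w j : ℤ) = z j := by exact_mod_cast h'
    omega
  have hneM : (fun i => ((z i - w i : ℤ) : ℝ)) ≠ v := by
    rw [hvz]
    intro h
    have h' : ((z j - w j : ℤ) : ℝ) = ((z j : ℤ) : ℝ) := congrFun h j
    have : (z j - w j : ℤ) = z j := by exact_mod_cast h'
    omega
  have hmid : v = (1/2 : ℝ) • (fun i => ((z i + w i : ℤ) : ℝ))
      + (1/2 : ℝ) • (fun i => ((z i - w i : ℤ) : ℝ)) := by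
    rw [hvz]; funext i
    simp only [Pi.add_apply, Pi.smul_apply, smul_eq_mul]
    push_cast; ring
  exact hv.2 (not_vertex_of_midpoint _ v _ _ memP memM hneP hneM hmid)

lemma sum_sq_powerset {n : ℕ} (a : Fin n → ℤ) (S : Finset (Fin n)) :
    ∑ T ∈ S.powerset, (2 * ∑ i ∈ T, a i - ∑ i ∈ S, a i)^2
      = 2^S.card * ∑ i ∈ S, (a i)^2 := by
  classical
  induction S using Finset.induction_on with
  | empty => simp
  | @insert j S' hj ih =>
    rw [Finset.sum_powerset_insert hj, Finset.sum_insert hj, Finset.sum_insert hj,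
        Finset.card_insert_of_notMem hj]
    have h2 : ∑ T ∈ S'.powerset, (2 * ∑ i ∈ insert j T, a i - (a j + ∑ i ∈ S', a i))^2
        = ∑ T ∈ S'.powerset, (2 * (a j + ∑ i ∈ T, a i) - (a j + ∑ i ∈ S', a i))^2 := by
      refine Finset.sum_congr rfl fun T hT => ?_
      rw [Finset.sum_insert (fun h => hj (Finset.mem_powerset.1 hT h))]
    rw [h2, ← Finset.sum_add_distrib]
    have h3 : ∀ x : ℤ, (2 * x - (a j + ∑ i ∈ S', a i))^2
        + (2 * (a j + x) - (a j + ∑ i ∈ S', a i))^2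
        = 2 * (2 * x - ∑ i ∈ S', a i)^2 + 2 * (a j)^2 := by intro x; ring
    simp_rw [h3]
    rw [Finset.sum_add_distrib, ← Finset.mul_sum, ih, Finset.sum_const,
        Finset.card_powerset]
    ring

lemma intSqrt_mono {a b : ℤ} (h : a ≤ b) : Int.sqrt a ≤ Int.sqrt b := by
  unfold Int.sqrt
  exact_mod_cast Nat.sqrt_le_sqrt (Int.toNat_le_toNat h)

lemma count_bound {n : ℕ} (a : Fin n → ℤ) (S : Finset (Fin n))
    (hinj : ∀ T₁ ∈ S.powerset, ∀ T₂ ∈ S.powerset,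
      (∑ i ∈ T₁, a i) = (∑ i ∈ T₂, a i) → T₁ = T₂)
    (hN : 1 ≤ ∑ i ∈ S, (a i)^2) :
    3 * 2^S.card ≤ 4 * Int.sqrt (4 * ∑ i ∈ S, (a i)^2) + 3 := by
  classical
  set N : ℤ := ∑ i ∈ S, (a i)^2 with hNdef
  set M : ℤ := ∑ i ∈ S, a i with hMdef
  set q : ℤ := Int.sqrt (4 * N) with hqdef
  have hq0 : 0 ≤ q := Int.sqrt_nonneg _
  set B : Finset (Finset (Fin n)) :=
    S.powerset.filter (fun T => (2 * ∑ i ∈ T, a i - M)^2 ≤ 4 * N) with hBdef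
  set C : Finset (Finset (Fin n)) :=
    S.powerset.filter (fun T => ¬ (2 * ∑ i ∈ T, a i - M)^2 ≤ 4 * N) with hCdef
  have hsplit : B.card + C.card = 2^S.card := by
    rw [hBdef, hCdef, Finset.card_filter_add_card_filter_not,
        Finset.card_powerset]
  -- bound C.card
  have hCsum : (4 * N + 1) * C.card ≤ 2^S.card * N := by
    calc (4 * N + 1) * (C.card : ℤ) = ∑ _T ∈ C, (4 * N + 1) := by
          rw [Finset.sum_const, nsmul_eq_mul]; ring
      _ ≤ ∑ T ∈ C, (2 * ∑ i ∈ T, a i - M)^2 := by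
          refine Finset.sum_le_sum fun T hT => ?_
          have := (Finset.mem_filter.1 hT).2
          omega
      _ ≤ ∑ T ∈ S.powerset, (2 * ∑ i ∈ T, a i - M)^2 :=
          Finset.sum_le_sum_of_subset_of_nonneg (Finset.filter_subset _ _)
            (fun T _ _ => sq_nonneg _)
      _ = 2^S.card * N := sum_sq_powerset a S
  have hC : 4 * (C.card : ℤ) + 1 ≤ 2^S.card := by
    have h2s : (1 : ℤ) ≤ 2^S.card := one_le_pow₀ (by norm_num)
    have hc0 : (0 : ℤ) ≤ (C.card : ℤ) := Int.natCast_nonneg _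
    nlinarith [mul_nonneg (sub_nonneg.2 hN) hc0]
  -- bound B.card
  have hB : (B.card : ℤ) ≤ q + 1 := by
    have hinj' : Set.InjOn (fun T => ∑ i ∈ T, a i) (B : Set (Finset (Fin n))) := by
      intro T₁ h₁ T₂ h₂ h
      exact hinj T₁ (Finset.mem_of_mem_filter _ (Finset.mem_coe.1 h₁))
        T₂ (Finset.mem_of_mem_filter _ (Finset.mem_coe.1 h₂)) h
    have hmaps : ∀ T ∈ B, (∑ i ∈ T, a i) ∈ Finset.Icc ((M - q) / 2) ((M + q) / 2) := by
      intro T hT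
      have hle : (2 * ∑ i ∈ T, a i - M)^2 ≤ 4 * N := (Finset.mem_filter.1 hT).2
      set k : ℤ := ∑ i ∈ T, a i
      have habs : |2 * k - M| ≤ q := by
        have h1 : Int.sqrt ((2 * k - M)^2) ≤ q := by
          rw [hqdef]; exact intSqrt_mono hle
        rwa [sq, Int.sqrt_eq, ← Int.abs_eq_natAbs] at h1
      have h1 : M - q ≤ 2 * k := by have := abs_le.1 habs; omega
      have h2 : 2 * k ≤ M + q := by have := abs_le.1 habs; omega
      refine Finset.mem_Icc.2 ⟨?_, ?_⟩
      · calc (M - q) / 2 ≤ (2 * k) / 2 := Int.ediv_le_ediv (by norm_num) h1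
          _ = k := by omega
      · calc k = (2 * k) / 2 := by omega
          _ ≤ (M + q) / 2 := Int.ediv_le_ediv (by norm_num) h2
    have hcard := Finset.card_le_card_of_injOn _ hmaps hinj'
    have hIcc : (Finset.Icc ((M - q) / 2) ((M + q) / 2)).card ≤ (q + 1).toNat := by
      rw [Int.card_Icc]
      have : (M + q) / 2 = (M - q) / 2 + q := by
        have : M + q = (M - q) + q * 2 := by ring
        rw [this, Int.add_mul_ediv_right _ _ (by norm_num)]
      omega
    have := hcard.trans hIcc
    omega
  have h2s : (2 : ℤ)^S.card = (B.card : ℤ) + (C.card : ℤ) := by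
    exact_mod_cast hsplit.symm
  push_cast at *
  linarith

theorem stmt3 {n : ℕ} (a : Fin n → ℤ) (ha : a ≠ 0) (b : ℤ) (v : Fin n → ℝ)
    (hv : IsVertex (knapsackHull a b) v)
    (s : ℕ) (hs : s = (Function.support v).ncard)
    (Δ : ℕ) (hΔ : Δ = Finset.univ.sup fun i => (a i).natAbs) :
    (s : ℝ) ≤ Real.logb 2 (3.51 * Real.sqrt s * Δ) := by
  classical
  rcases Nat.eq_zero_or_pos s with hs0 | hspos
  · subst hs0
    simp [Real.logb]
  -- extract the integer point
  obtain ⟨z, hz0, hzb, hvz⟩ := vertex_integral a b v hv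
  set S : Finset (Fin n) := Finset.univ.filter (fun i => z i ≠ 0) with hS
  have hsupp : Function.support v = ↑S := by
    ext i
    simp [hvz, Function.mem_support, hS]
  have hsS : s = S.card := by rw [hs, hsupp, Set.ncard_coe_finset]
  -- injectivity of subset sums
  have hinj : ∀ T₁ ∈ S.powerset, ∀ T₂ ∈ S.powerset,
      (∑ i ∈ T₁, a i) = (∑ i ∈ T₂, a i) → T₁ = T₂ := by
    intro T₁ h₁ T₂ h₂ h
    refine subset_sums_inj a b v hv z hz0 hzb hvz T₁ T₂ ?_ ?_ h
    · intro i hi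
      exact (Finset.mem_filter.1 (Finset.mem_powerset.1 h₁ hi)).2
    · intro i hi
      exact (Finset.mem_filter.1 (Finset.mem_powerset.1 h₂ hi)).2
  -- entries of a are nonzero on S
  have hane : ∀ i ∈ S, a i ≠ 0 := by
    intro i hi hai
    have h1 : ({i} : Finset (Fin n)) ∈ S.powerset :=
      Finset.mem_powerset.2 (Finset.singleton_subset_iff.2 hi)
    have h2 : (∅ : Finset (Fin n)) ∈ S.powerset := Finset.mem_powerset.2 (Finset.empty_subset _)
    have := hinj {i} h1 ∅ h2 (by simp [hai])
    simp at this
  set N : ℤ := ∑ i ∈ S, (a i)^2 with hN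
  have hNs : (S.card : ℤ) ≤ N := by
    rw [hN]
    calc (S.card : ℤ) = ∑ _i ∈ S, 1 := by simp
      _ ≤ ∑ i ∈ S, (a i)^2 := Finset.sum_le_sum fun i hi => by
          have := hane i hi
          have : 1 ≤ |a i| := Int.one_le_abs (by omega)
          nlinarith [sq_abs (a i)]
  have hN1 : 1 ≤ N := by
    have : 1 ≤ S.card := by omega
    omega
  have hcount := count_bound a S hinj hN1
  -- Δ ≥ 1
  have hΔ1 : 1 ≤ Δ := by
    obtain ⟨i, hi⟩ := Function.ne_iff.1 ha
    have hi' : a i ≠ 0 := by simpa using hi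
    have : (a i).natAbs ≤ Δ := hΔ ▸ Finset.le_sup (f := fun i => (a i).natAbs) (Finset.mem_univ i)
    omega
  -- N ≤ s * Δ^2
  have hNle : N ≤ (s : ℤ) * (Δ : ℤ)^2 := by
    rw [hN, hsS]
    calc ∑ i ∈ S, (a i)^2 ≤ ∑ _i ∈ S, (Δ : ℤ)^2 := by
          refine Finset.sum_le_sum fun i _ => ?_
          have h1 : (a i).natAbs ≤ Δ := hΔ ▸ Finset.le_sup (f := fun i => (a i).natAbs) (Finset.mem_univ i)
          have h2 : |a i| ≤ (Δ : ℤ) := by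
            rw [Int.abs_eq_natAbs]; exact_mod_cast h1
          nlinarith [sq_abs (a i), abs_nonneg (a i)]
      _ = (S.card : ℤ) * (Δ : ℤ)^2 := by rw [Finset.sum_const, nsmul_eq_mul]
  -- pass to the reals
  set q : ℤ := Int.sqrt (4 * N) with hq
  have hq0 : (0 : ℤ) ≤ q := Int.sqrt_nonneg _
  have hqsq : q^2 ≤ 4 * N := by
    rw [hq]
    unfold Int.sqrt
    have h1 : (Nat.sqrt (4*N).toNat)^2 ≤ (4*N).toNat := Nat.sqrt_le' _
    have h2 : ((4*N).toNat : ℤ) = 4 * N := Int.toNat_of_nonneg (by omega)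
    calc ((Nat.sqrt (4*N).toNat : ℤ))^2 = ((Nat.sqrt (4*N).toNat)^2 : ℕ) := by push_cast; ring
      _ ≤ (((4*N).toNat : ℕ) : ℤ) := by exact_mod_cast h1
      _ = 4 * N := h2
  have hqR : (q : ℝ) ≤ 2 * Real.sqrt s * Δ := by
    have h1 : (q : ℝ)^2 ≤ 4 * (s : ℝ) * (Δ : ℝ)^2 := by
      have : (q:ℝ)^2 ≤ 4 * (N:ℝ) := by exact_mod_cast hqsq
      have : (N:ℝ) ≤ (s:ℝ) * (Δ:ℝ)^2 := by exact_mod_cast hNle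
      nlinarith
    have h2 : 2 * Real.sqrt s * Δ = Real.sqrt (4 * (s:ℝ) * (Δ:ℝ)^2) := by
      rw [show 4 * (s:ℝ) * (Δ:ℝ)^2 = (2 * Real.sqrt s * Δ)^2 by
        rw [mul_pow, mul_pow, Real.sq_sqrt (Nat.cast_nonneg s)]; ring]
      rw [Real.sqrt_sq (by positivity)]
    rw [h2]
    exact (Real.le_sqrt (by positivity) (by positivity)).2 h1
  have hR : 3 * (2:ℝ)^s ≤ 8 * Real.sqrt s * Δ + 3 := by
    have h0 : (3:ℝ) * 2^S.card ≤ 4 * (q:ℝ) + 3 := by exact_mod_cast hcount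
    rw [← hsS] at h0
    linarith
  have key : (2:ℝ)^s ≤ 3.51 * Real.sqrt s * Δ := by
    rcases le_or_gt 2 (s * Δ * Δ) with h | h
    · have hsq : (2:ℝ) ≤ (Real.sqrt s * Δ)^2 := by
        have : (2:ℝ) ≤ (s:ℝ) * Δ * Δ := by exact_mod_cast h
        have e : (Real.sqrt s * Δ)^2 = (s:ℝ) * Δ * Δ := by
          rw [mul_pow, Real.sq_sqrt (Nat.cast_nonneg s)]; ring
        linarith [e]
      have hX : Real.sqrt 2 ≤ Real.sqrt s * Δ := by
        have := Real.sqrt_le_sqrt hsq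
        rwa [Real.sqrt_sq (by positivity)] at this
      have h141 : (1.414:ℝ) ≤ Real.sqrt 2 :=
        (Real.le_sqrt (by norm_num) (by norm_num)).2 (by norm_num)
      linarith
    · have hsle : s ≤ s * Δ * Δ := by
        calc s = s * 1 * 1 := by ring
          _ ≤ s * Δ * Δ := by gcongr <;> omega
      have hdle : Δ ≤ s * Δ * Δ := by
        calc Δ = 1 * Δ * 1 := by ring
          _ ≤ s * Δ * Δ := by gcongr <;> omega
      have hs1 : s = 1 := by omega
      have hd1 : Δ = 1 := by omega
      rw [hs1, hd1]
      simp [Real.sqrt_one]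
      norm_num
  have hpos : (0:ℝ) < 3.51 * Real.sqrt s * Δ :=
    lt_of_lt_of_le (by positivity) key
  have hlog : Real.logb 2 ((2:ℝ)^s) = s := by
    rw [Real.logb_pow, Real.logb_self_eq_one (by norm_num), mul_one]
  calc (s:ℝ) = Real.logb 2 ((2:ℝ)^s) := hlog.symm
    _ ≤ Real.logb 2 (3.51 * Real.sqrt s * Δ) :=
      (Real.logb_le_logb one_lt_two (by positivity) hpos).2 key
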